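/- Let π0 ∈ ℝ, let u, φ : ℝ → ℝ be twice differentiable, and let q : ℝ → ℝ be differentiable and satisfy the first-order condition π0 − u'(q(f)) − φ'(f − q(f)) = 0 for every f ∈ ℝ. Fix f ∈ ℝ and suppose φ''(f − q(f)) ≥ 0 and u''(q(f)) < 0. Then the derivative of q at f equals φ''(f − q(f)) / (φ''(f − q(f)) − u''(q(f))), and this value α satisfies 0 ≤ α < 1. -/

import Mathlib

theorem stmt_2 (π0 : ℝ) (u φ q : ℝ → ℝ)
    (hu : Differentiable ℝ u) (hu2 : Differentiable ℝ (deriv u))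
    (hφ : Differentiable ℝ φ) (hφ2 : Differentiable ℝ (deriv φ))
    (hq : Differentiable ℝ q)
    (hfoc : ∀ f : ℝ, π0 - deriv u (q f) - deriv φ (f - q f) = 0)
    (f : ℝ)
    (hφ'' : 0 ≤ deriv (deriv φ) (f - q f))
    (hu'' : deriv (deriv u) (q f) < 0) :
    deriv q f =
      deriv (deriv φ) (f - q f) /
        (deriv (deriv φ) (f - q f) - deriv (deriv u) (q f)) ∧
    0 ≤ deriv q f ∧ deriv q f < 1 := by
  set A := deriv (deriv u) (q f) with hA
  set B := deriv (deriv φ) (f - q f) with hB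
  have hden : 0 < B - A := by linarith
  -- the FOC as a constant function
  have hconst : (fun x => deriv u (q x) + deriv φ (x - q x)) = fun _ => π0 := by
    funext x; linarith [hfoc x]
  have h1 : HasDerivAt (fun x => deriv u (q x)) (A * deriv q f) f :=
    (hu2 (q f)).hasDerivAt.comp f (hq f).hasDerivAt
  have hinner : HasDerivAt (fun x : ℝ => x - q x) (1 - deriv q f) f :=
    (hasDerivAt_id f).sub (hq f).hasDerivAt
  have h2 : HasDerivAt (fun x => deriv φ (x - q x)) (B * (1 - deriv q f)) f :=
    by have := (hφ2 (f - q f)).hasDerivAt.comp f hinner; exact this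
  have hsum : HasDerivAt (fun x => deriv u (q x) + deriv φ (x - q x))
      (A * deriv q f + B * (1 - deriv q f)) f := h1.add h2
  have hzero : HasDerivAt (fun x => deriv u (q x) + deriv φ (x - q x)) 0 f := by
    rw [hconst]; exact hasDerivAt_const f π0
  have heq : A * deriv q f + B * (1 - deriv q f) = 0 :=
    hsum.unique hzero
  have hmain : deriv q f = B / (B - A) := by
    rw [eq_div_iff hden.ne']; nlinarith
  refine ⟨hmain, ?_, ?_⟩
  · rw [hmain]; exact div_nonneg hφ'' hden.le
  · rw [hmain, div_lt_one hden]; linarith
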